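/- If a quiver Q with a Hamiltonian oriented cycle w0 (labeled 1→2→…→n→1) admits another oriented cycle w1 passing through all vertices in a different cyclic order, then Q admits no R-charge (and hence no cut). -/

import Mathlib

open Relation
open Fin.NatCast Fin.CommRing

/-- One directed step along an arrow of the quiver. -/
def QStep {V A : Type} (s t : A → V) (i j : V) : Prop := ∃ a : A, s a = i ∧ t a = j

/-- One undirected step along an arrow of the quiver. -/
def UStep {V A : Type} (s t : A → V) (i j : V) : Prop :=
  ∃ a : A, (s a = i ∧ t a = j) ∨ (s a = j ∧ t a = i)

/-- A current is conserved if at each vertex the incoming total equals the outgoing total. -/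
def Conserved {V A : Type} [Fintype A] [DecidableEq V] (s t : A → V) (lam : A → ℝ) : Prop :=
  ∀ i : V, ∑ a ∈ Finset.univ.filter (fun a => t a = i), lam a
         = ∑ a ∈ Finset.univ.filter (fun a => s a = i), lam a

/-- A simple oriented cycle of the quiver: a nonempty cyclically composable list of arrows
whose sources are pairwise distinct. -/
structure SimpleCycle {V A : Type} (s t : A → V) where
  arrows : List A
  nonempty : arrows ≠ []
  chain : ∀ k : ℕ, ∀ h : k < arrows.length,
    t (arrows.get ⟨k, h⟩) =
      s (arrows.get ⟨(k + 1) % arrows.length, Nat.mod_lt _ (List.length_pos_iff.mpr nonempty)⟩)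
  simple : (arrows.map s).Nodup

/-- A cut: every simple oriented cycle contains exactly one arrow of `I`. -/
def IsCut {V A : Type} [DecidableEq A] (s t : A → V) (I : Finset A) : Prop :=
  ∀ w : SimpleCycle s t, (w.arrows.filter (fun a => decide (a ∈ I))).length = 1

/-- A weak cut: every simple oriented cycle contains at most one arrow of `I`. -/
def IsWeakCut {V A : Type} [DecidableEq A] (s t : A → V) (I : Finset A) : Prop :=
  ∀ w : SimpleCycle s t, (w.arrows.filter (fun a => decide (a ∈ I))).length ≤ 1

/-- An R-charge: a real function on arrows summing to 2 around every simple oriented cycle. -/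
def IsRCharge {V A : Type} (s t : A → V) (R : A → ℝ) : Prop :=
  ∀ w : SimpleCycle s t, (w.arrows.map R).sum = 2

/-- If a quiver with a Hamiltonian oriented cycle `1 → 2 → ⋯ → n → 1` has another
Hamiltonian oriented cycle visiting the vertices in a different cyclic order (a
permutation which is not a rotation), then it admits no R-charge and no cut. -/
lemma nat_mod_inj {n x y : ℕ} (h : x % n = y % n) (hlt : y < x) (hb : x < y + n) : False := by
  have h1 : n ∣ x - y := (Nat.modEq_iff_dvd' hlt.le).mp h.symm
  have h2 := Nat.le_of_dvd (by omega) h1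
  omega

def mkCycle {V A : Type} (s t : A → V) {M : ℕ} [NeZero M] (g : Fin M → A)
    (hchain : ∀ k : Fin M, t (g k) = s (g (k + 1)))
    (hinj : Function.Injective fun k : Fin M => s (g k)) : SimpleCycle s t where
  arrows := List.ofFn g
  nonempty := by
    intro h
    have hlen : (List.ofFn g).length = M := List.length_ofFn
    rw [h] at hlen
    exact NeZero.ne M (by simpa using hlen.symm)
  chain := by
    intro k h
    have hlen : (List.ofFn g).length = M := List.length_ofFn
    have hkM : k < M := hlen ▸ h
    have hget : ∀ (p : ℕ) (hp : p < (List.ofFn g).length) (hp' : p < M),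
        (List.ofFn g).get ⟨p, hp⟩ = g ⟨p, hp'⟩ := by
      intro p hp hp'
      rw [List.get_ofFn]
      rfl
    have hmod : (k + 1) % (List.ofFn g).length < M := by
      rw [hlen]; exact Nat.mod_lt _ (Nat.pos_of_ne_zero (NeZero.ne M))
    have hidx : (⟨(k + 1) % (List.ofFn g).length, hmod⟩ : Fin M) = ⟨k, hkM⟩ + 1 := by
      apply Fin.ext
      simp only [Fin.add_def, Fin.val_one']
      rw [hlen]
      simp [Nat.add_mod]
    rw [hget k h hkM, hget _ _ hmod, hidx]
    exact hchain ⟨k, hkM⟩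
  simple := by
    rw [List.map_ofFn, List.nodup_ofFn]
    exact hinj

lemma key_charge {A : Type} {n : ℕ} [NeZero n] (s t : A → Fin n)
    (e : Fin n → A) (hse : ∀ i, s (e i) = i) (hte : ∀ i, t (e i) = i + 1)
    (R : A → ℝ) (hR : IsRCharge s t R)
    (a : A) (i j : Fin n) (hsa : s a = i) (hta : t a = j) (hij : i ≠ j) :
    R a + ∑ p ∈ Finset.range ((i - j).val), R (e (j + (p : Fin n))) = 2 := by
  set m : ℕ := (i - j).val with hm
  have hmn : m < n := (i - j).isLt
  have hm0 : 0 < m := by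
    rcases Nat.eq_zero_or_pos m with h | h
    · exact absurd (sub_eq_zero.mp (Fin.ext h : i - j = 0)) hij
    · exact h
  have hcast : ∀ p : ℕ, j + (p : Fin n) = ((j.val + p : ℕ) : Fin n) := by
    intro p; push_cast [Fin.cast_val_eq_self]; ring
  have hjm : j + (m : Fin n) = i := by
    rw [hm, Fin.cast_val_eq_self, add_comm, sub_add_cancel]
  have hv : ∀ x : ℕ, ((x : Fin n)).val = x % n := by
    intro x; simp [Fin.val_natCast]
  set g : Fin (m + 1) → A := fun l => if l.val = 0 then a else e (j + ((l.val - 1 : ℕ) : Fin n))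
    with hgdef
  have hg0 : ∀ l : Fin (m + 1), l.val = 0 → g l = a := by
    intro l h; simp only [hgdef]; rw [if_pos h]
  have hgp : ∀ l : Fin (m + 1), l.val ≠ 0 → g l = e (j + ((l.val - 1 : ℕ) : Fin n)) := by
    intro l h; simp only [hgdef]; rw [if_neg h]
  have hadd1 : ∀ l : Fin (m + 1), (l + 1).val = (l.val + 1) % (m + 1) := by
    intro l
    simp only [Fin.add_def, Fin.val_one']
    simp [Nat.add_mod]
  have hsucc : ∀ x : ℕ, j + ((x : ℕ) : Fin n) + 1 = j + ((x + 1 : ℕ) : Fin n) := by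
    intro x; push_cast; ring
  have hchain : ∀ l : Fin (m + 1), t (g l) = s (g (l + 1)) := by
    intro l
    by_cases h0 : l.val = 0
    · have h1 : (l + 1).val = 1 := by
        rw [hadd1, h0]; exact Nat.mod_eq_of_lt (by omega)
      rw [hg0 l h0, hgp (l+1) (by omega), hta, hse, h1]
      norm_num
    · have hl1 : 1 ≤ l.val := Nat.one_le_iff_ne_zero.mpr h0
      have hlm : l.val ≤ m := Nat.lt_succ_iff.mp l.isLt
      rw [hgp l h0, hte]
      by_cases h1 : l.val = m
      · have h2 : (l + 1).val = 0 := by rw [hadd1, h1]; exact Nat.mod_self _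
        rw [hg0 (l+1) h2, hsa, h1, hsucc, Nat.sub_add_cancel hm0, hjm]
      · have hlt : l.val < m := lt_of_le_of_ne hlm h1
        have h2 : (l + 1).val = l.val + 1 := by
          rw [hadd1]; exact Nat.mod_eq_of_lt (by omega)
        rw [hgp (l+1) (by omega), hse, h2, hsucc, Nat.sub_add_cancel hl1]
        norm_num
  have hinj : Function.Injective fun l : Fin (m + 1) => s (g l) := by
    intro l1 l2 hl
    dsimp only at hl
    by_cases h1 : l1.val = 0 <;> by_cases h2 : l2.val = 0
    · exact Fin.ext (h1.trans h2.symm)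
    · exfalso
      rw [hg0 l1 h1, hgp l2 h2, hse, hsa, ← hjm, hcast, hcast] at hl
      have hval := congrArg Fin.val hl
      rw [hv, hv] at hval
      exact nat_mod_inj hval (by omega) (by omega)
    · exfalso
      rw [hg0 l2 h2, hgp l1 h1, hse, hsa, ← hjm, hcast, hcast] at hl
      have hval := congrArg Fin.val hl
      rw [hv, hv] at hval
      exact nat_mod_inj hval.symm (by omega) (by omega)
    · rw [hgp l1 h1, hgp l2 h2, hse, hse, hcast, hcast] at hl
      have hval := congrArg Fin.val hl
      rw [hv, hv] at hval
      have e1 : l1.val - 1 < m := by omega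
      have e2 : l2.val - 1 < m := by omega
      rcases lt_trichotomy l1.val l2.val with hc | hc | hc
      · exact absurd (nat_mod_inj hval.symm (by omega) (by omega)) not_false
      · exact Fin.ext hc
      · exact absurd (nat_mod_inj hval (by omega) (by omega)) not_false
  have hcyc := hR (mkCycle s t g hchain hinj)
  have harr : (mkCycle s t g hchain hinj).arrows = List.ofFn g := rfl
  rw [harr, List.map_ofFn, List.sum_ofFn, Fin.sum_univ_succ] at hcyc
  have hc0 : (R ∘ g) 0 = R a := by
    simp only [Function.comp]
    rw [hg0 0 rfl]
  have hcs : ∀ p : Fin m, (R ∘ g) p.succ = R (e (j + ((p.val : ℕ) : Fin n))) := by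
    intro p
    simp only [Function.comp]
    rw [hgp p.succ (by simp [Fin.val_succ]), Fin.val_succ]
    norm_num
  rw [hc0, Finset.sum_congr rfl (fun p _ => hcs p)] at hcyc
  rw [← hcyc]
  congr 1
  exact (Fin.sum_univ_eq_sum_range (fun q => R (e (j + (q : Fin n)))) m).symm

lemma path_sum {A : Type} {n : ℕ} [NeZero n] (e : Fin n → A) (R : A → ℝ)
    (h2 : ∑ p ∈ Finset.range n, R (e (p : Fin n)) = 2) (i j : Fin n) :
    ∑ p ∈ Finset.range ((i - j).val), R (e (j + (p : Fin n)))
      = (∑ p ∈ Finset.range i.val, R (e (p : Fin n)))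
        - (∑ p ∈ Finset.range j.val, R (e (p : Fin n)))
        + (if i.val < j.val then 2 else 0) := by
  have hcast : ∀ p : ℕ, j + (p : Fin n) = ((j.val + p : ℕ) : Fin n) := by
    intro p; push_cast [Fin.cast_val_eq_self]; ring
  have hjn := j.isLt
  have hin := i.isLt
  rcases le_or_gt j.val i.val with hji | hij
  · have hsub : (i - j).val = i.val - j.val := Fin.sub_val_of_le (Fin.le_def.mpr hji)
    rw [if_neg (by omega), hsub]
    have hstep : ∑ p ∈ Finset.range (i.val - j.val), R (e (j + (p : Fin n)))
        = ∑ p ∈ Finset.range (i.val - j.val), R (e ((j.val + p : ℕ) : Fin n)) :=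
      Finset.sum_congr rfl (fun p _ => by rw [hcast p])
    have hi : (∑ p ∈ Finset.range i.val, R (e (p : Fin n)))
        = (∑ p ∈ Finset.range j.val, R (e (p : Fin n)))
          + ∑ p ∈ Finset.range (i.val - j.val), R (e ((j.val + p : ℕ) : Fin n)) := by
      have h : j.val + (i.val - j.val) = i.val := by omega
      rw [← Finset.sum_range_add, h]
    rw [hstep]
    rw [hi]
    ring
  · have hsub : (i - j).val = (n - j.val) + i.val := by
      have h : (i - j).val = (n - j.val + i.val) % n := by rw [Fin.sub_def]
      rw [h]
      exact Nat.mod_eq_of_lt (by omega)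
    rw [if_pos hij, hsub, Finset.sum_range_add]
    have hsplit : (2:ℝ) = (∑ p ∈ Finset.range j.val, R (e (p : Fin n)))
        + ∑ p ∈ Finset.range (n - j.val), R (e ((j.val + p : ℕ) : Fin n)) := by
      have h : j.val + (n - j.val) = n := by omega
      rw [← h2, ← Finset.sum_range_add, h]
    have hfirst : ∑ p ∈ Finset.range (n - j.val), R (e (j + (p : Fin n)))
        = 2 - ∑ p ∈ Finset.range j.val, R (e (p : Fin n)) := by
      have hstep : ∑ p ∈ Finset.range (n - j.val), R (e (j + (p : Fin n)))
          = ∑ p ∈ Finset.range (n - j.val), R (e ((j.val + p : ℕ) : Fin n)) :=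
        Finset.sum_congr rfl (fun p _ => by rw [hcast p])
      rw [hstep]
      linarith [hsplit]
    have hsecond : ∑ p ∈ Finset.range i.val, R (e (j + ((n - j.val + p : ℕ) : Fin n)))
        = ∑ p ∈ Finset.range i.val, R (e (p : Fin n)) := by
      apply Finset.sum_congr rfl
      intro p _
      congr 2
      rw [hcast]
      have h : j.val + (n - j.val + p) = n + p := by omega
      rw [h]
      simp [Nat.cast_add, Fin.natCast_self]
    rw [hfirst, hsecond]
    ring

theorem stmt12 {A : Type} [Fintype A] [DecidableEq A] {n : ℕ} [NeZero n]
    (s t : A → Fin n)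
    (e : Fin n → A) (hse : ∀ i : Fin n, s (e i) = i) (hte : ∀ i : Fin n, t (e i) = i + 1)
    (hw0 : ∃ w : SimpleCycle s t, w.arrows = List.ofFn e)
    (σ : Equiv.Perm (Fin n)) (f : Fin n → A)
    (hsf : ∀ k : Fin n, s (f k) = σ k) (htf : ∀ k : Fin n, t (f k) = σ (k + 1))
    (hw1 : ∃ w : SimpleCycle s t, w.arrows = List.ofFn f)
    (hdiff : ¬ ∃ c : Fin n, ∀ x : Fin n, σ x = x + c) :
    (¬ ∃ R : A → ℝ, IsRCharge s t R) ∧ (¬ ∃ I : Finset A, IsCut s t I) := by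
  classical
  have hnoR : ¬ ∃ R : A → ℝ, IsRCharge s t R := by
    rintro ⟨R, hRch⟩
    by_cases hn1 : n = 1
    · subst hn1
      exact hdiff ⟨0, fun x => Subsingleton.elim _ _⟩
    have hn2 : 2 ≤ n := by have := NeZero.pos n; omega
    have hone : (1 : Fin n).val = 1 := by rw [Fin.val_one']; exact Nat.mod_eq_of_lt hn2
    have hkne : ∀ k : Fin n, k ≠ k + 1 := by
      intro k h
      have h1 : (1 : Fin n) = 0 := (left_eq_add.mp h)
      have h2 := congrArg Fin.val h1
      rw [hone] at h2
      simp at h2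
    obtain ⟨w0, hw0a⟩ := hw0
    obtain ⟨w1, hw1a⟩ := hw1
    have hRe : ∑ x : Fin n, R (e x) = 2 := by
      have h := hRch w0
      rwa [hw0a, List.map_ofFn, List.sum_ofFn] at h
    have hRf : ∑ x : Fin n, R (f x) = 2 := by
      have h := hRch w1
      rwa [hw1a, List.map_ofFn, List.sum_ofFn] at h
    have hc2 : ∑ p ∈ Finset.range n, R (e (p : Fin n)) = 2 := by
      rw [← Fin.sum_univ_eq_sum_range (fun p => R (e (p : Fin n))) n, ← hRe]
      exact Finset.sum_congr rfl (fun x _ => by rw [Fin.cast_val_eq_self])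
    set c : Fin n → ℝ := fun x => ∑ p ∈ Finset.range x.val, R (e (p : Fin n)) with hcdef
    have hkey : ∀ k : Fin n,
        R (f k) + (c (σ k) - c (σ (k+1)) + (if (σ k).val < (σ (k+1)).val then (2:ℝ) else 0))
          = 2 := by
      intro k
      have hne : σ k ≠ σ (k+1) := fun h => hkne k (σ.injective h)
      have h := key_charge s t e hse hte R hRch (f k) (σ k) (σ (k+1)) (hsf k) (htf k) hne
      rw [path_sum e R hc2 (σ k) (σ (k+1))] at h
      exact h
    have hsum : ∑ k : Fin n,
        (R (f k) + (c (σ k) - c (σ (k+1)) + (if (σ k).val < (σ (k+1)).val then (2:ℝ) else 0)))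
          = ∑ _k : Fin n, (2:ℝ) := Finset.sum_congr rfl (fun k _ => hkey k)
    rw [Finset.sum_add_distrib, Finset.sum_add_distrib, Finset.sum_sub_distrib, hRf] at hsum
    have htel : ∑ k : Fin n, c (σ (k+1)) = ∑ k : Fin n, c (σ k) :=
      Fintype.sum_equiv (Equiv.addRight (1 : Fin n)) _ _ (fun k => rfl)
    rw [htel, sub_self] at hsum
    set D := (Finset.univ.filter (fun k : Fin n => (σ k).val < (σ (k+1)).val)).card with hDdef
    have hite : ∑ k : Fin n, (if (σ k).val < (σ (k+1)).val then (2:ℝ) else 0) = (D:ℝ) * 2 := by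
      rw [← Finset.sum_filter, Finset.sum_const, ← hDdef, nsmul_eq_mul]
    rw [hite, Finset.sum_const, Finset.card_univ, Fintype.card_fin, nsmul_eq_mul] at hsum
    have hDn : D + 1 = n := by
      have h : (D:ℝ) + 1 = (n:ℝ) := by linarith
      exact_mod_cast h
    have hcard : (Finset.univ.filter (fun k : Fin n => (σ (k+1)).val < (σ k).val)).card = 1 := by
      have hpart := Finset.card_filter_add_card_filter_not
        (s := (Finset.univ : Finset (Fin n))) (p := fun k : Fin n => (σ k).val < (σ (k+1)).val)
      have hcongr : Finset.univ.filter (fun k : Fin n => ¬ (σ k).val < (σ (k+1)).val)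
          = Finset.univ.filter (fun k : Fin n => (σ (k+1)).val < (σ k).val) := by
        apply Finset.filter_congr
        intro k _
        have hne : (σ k).val ≠ (σ (k+1)).val := fun h => hkne k (σ.injective (Fin.ext h))
        constructor
        · intro h; omega
        · intro h; omega
      rw [hcongr, Finset.card_univ, Fintype.card_fin, ← hDdef] at hpart
      omega
    set d : Fin n → ℕ := fun k => (σ (k+1) - σ k).val with hddef
    have hd_pos : ∀ k : Fin n, 1 ≤ d k := by
      intro k
      have hne : σ (k+1) ≠ σ k := fun h => hkne k (σ.injective h).symm
      have h0 : σ (k+1) - σ k ≠ 0 := sub_ne_zero.mpr hne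
      have h1 : d k ≠ 0 := fun h => h0 (Fin.ext h)
      omega
    have hdval : ∀ k : Fin n, (d k : ℤ)
        = ((σ (k+1)).val : ℤ) - ((σ k).val : ℤ)
          + (if (σ (k+1)).val < (σ k).val then (n:ℤ) else 0) := by
      intro k
      have hsub : (σ (k+1) - σ k).val = (n - (σ k).val + (σ (k+1)).val) % n := by
        rw [Fin.sub_def]
      have hx := (σ (k+1)).isLt
      have hy := (σ k).isLt
      have hne : (σ (k+1)).val ≠ (σ k).val :=
        fun h => hkne k (σ.injective (Fin.ext h)).symm
      by_cases hc : (σ (k+1)).val < (σ k).val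
      · rw [if_pos hc]
        have h : (n - (σ k).val + (σ (k+1)).val) % n = n - (σ k).val + (σ (k+1)).val :=
          Nat.mod_eq_of_lt (by omega)
        simp only [hddef]
        rw [hsub, h]
        push_cast
        omega
      · rw [if_neg hc]
        have heq : n - (σ k).val + (σ (k+1)).val = ((σ (k+1)).val - (σ k).val) + n := by omega
        have h : (n - (σ k).val + (σ (k+1)).val) % n = (σ (k+1)).val - (σ k).val := by
          rw [heq, Nat.add_mod_right]
          exact Nat.mod_eq_of_lt (by omega)
        simp only [hddef]
        rw [hsub, h]
        omega
    have hdsum : ∑ k : Fin n, (d k : ℤ) = n := by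
      rw [Finset.sum_congr rfl (fun k _ => hdval k)]
      rw [Finset.sum_add_distrib, Finset.sum_sub_distrib]
      have htel2 : ∑ k : Fin n, ((σ (k+1)).val : ℤ) = ∑ k : Fin n, ((σ k).val : ℤ) :=
        Fintype.sum_equiv (Equiv.addRight (1 : Fin n)) _ _ (fun k => rfl)
      rw [htel2, sub_self, zero_add, ← Finset.sum_filter, Finset.sum_const, hcard]
      simp
    have hdsum' : ∑ k : Fin n, d k = n := by exact_mod_cast hdsum
    have hd1 : ∀ k : Fin n, d k = 1 := by
      have h1 : ∑ _k : Fin n, (1:ℕ) = ∑ k : Fin n, d k := by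
        rw [hdsum']
        simp [Finset.card_univ]
      have h2 := (Finset.sum_eq_sum_iff_of_le (fun k _ => hd_pos k)).mp h1
      intro k
      exact (h2 k (Finset.mem_univ k)).symm
    have hstep : ∀ k : Fin n, σ (k + 1) = σ k + 1 := by
      intro k
      have h : σ (k+1) - σ k = 1 := by
        apply Fin.ext
        rw [hone]
        exact hd1 k
      calc σ (k+1) = 1 + σ k := sub_eq_iff_eq_add.mp h
        _ = σ k + 1 := add_comm _ _
    have hrot : ∀ p : ℕ, σ (p : Fin n) = (p : Fin n) + σ 0 := by
      intro p
      induction p with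
      | zero => simp
      | succ q ih =>
        have h : ((q+1 : ℕ) : Fin n) = (q : Fin n) + 1 := by push_cast; ring
        rw [h, hstep ((q : ℕ) : Fin n), ih]
        ring
    exact hdiff ⟨σ 0, fun x => by
      have h := hrot x.val
      rwa [Fin.cast_val_eq_self] at h⟩
  refine ⟨hnoR, ?_⟩
  rintro ⟨I, hI⟩
  apply hnoR
  refine ⟨fun a => if a ∈ I then 2 else 0, ?_⟩
  intro w
  have hlen := hI w
  have haux : ∀ l : List A, (l.map (fun a => if a ∈ I then (2:ℝ) else 0)).sum
      = 2 * ((l.filter (fun a => decide (a ∈ I))).length : ℝ) := by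
    intro l
    induction l with
    | nil => simp
    | cons a l ih =>
      by_cases h : a ∈ I
      · simp [List.filter_cons, h, ih]
        ring
      · simp [List.filter_cons, h, ih]
  rw [haux, hlen]
  norm_num
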